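/- Let ρ be a density matrix on ℂ^d with von Neumann entropy S(ρ) = −Tr(ρ log₂ ρ), and fix R < S(ρ). For every δ > 0 there exists N₀ ∈ ℕ such that for every N ≥ N₀ and every orthogonal projection S_N on (ℂ^d)^{⊗N} with Tr(S_N) < 2^{NR}, one has Tr[ S_N ρ^{⊗N} ] ≤ δ, where ρ^{⊗N} is the N-fold Kronecker (tensor) power of ρ. -/

import Mathlib

open Matrix
open scoped ComplexOrder

noncomputable section

/-- `N`-fold tensor (Kronecker) power of a matrix. -/
def tpow {d : Type*} (ρ : Matrix d d ℂ) (N : ℕ) : Matrix (Fin N → d) (Fin N → d) ℂ :=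
  Matrix.of fun a b => ∏ k, ρ (a k) (b k)

/-- The von Neumann entropy `S(ρ) = −Tr(ρ log₂ ρ) = −Σ_x p_x log₂ p_x`, computed from the
eigenvalues of a Hermitian matrix. -/
def vnEntropy {n : Type*} [Fintype n] [DecidableEq n] {ρ : Matrix n n ℂ}
    (hρ : ρ.IsHermitian) : ℝ :=
  -∑ i, hρ.eigenvalues i * Real.logb 2 (hρ.eigenvalues i)

theorem tpow_mul' {d : ℕ} (A B : Matrix (Fin d) (Fin d) ℂ) (N : ℕ) :
    tpow (A * B) N = tpow A N * tpow B N := by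
  ext a b
  simp only [tpow, Matrix.mul_apply, Matrix.of_apply]
  rw [Fintype.prod_sum]
  exact Finset.sum_congr rfl fun x _ => Finset.prod_mul_distrib

theorem tpow_diagonal' {d : ℕ} (p : Fin d → ℂ) (N : ℕ) :
    tpow (Matrix.diagonal p) N = Matrix.diagonal (fun x : Fin N → Fin d => ∏ k, p (x k)) := by
  ext a b
  by_cases h : a = b
  · subst h; simp [tpow, Matrix.diagonal]
  · obtain ⟨k, hk⟩ := Function.ne_iff.mp h
    rw [Matrix.diagonal_apply_ne _ h]
    exact Finset.prod_eq_zero (Finset.mem_univ k) (Matrix.diagonal_apply_ne _ hk)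

theorem tpow_star' {d : ℕ} (U : Matrix (Fin d) (Fin d) ℂ) (N : ℕ) :
    tpow (star U) N = star (tpow U N) := by
  ext a b
  simp only [tpow, Matrix.star_apply, Matrix.of_apply, Matrix.conjTranspose_apply,
    Matrix.star_eq_conjTranspose]
  exact (star_prod _ _).symm

theorem tpow_one' {d : ℕ} (N : ℕ) : tpow (1 : Matrix (Fin d) (Fin d) ℂ) N = 1 := by
  rw [← Matrix.diagonal_one, tpow_diagonal']
  simp

lemma prod_sum_factor {d : ℕ} (p h : Fin d → ℝ) (hp1 : ∑ i, p i = 1)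
    (hsum : ∑ i, p i * h i = 0) {N : ℕ} (k l : Fin N) :
    ∑ x : Fin N → Fin d, (∏ m, p (x m)) * (h (x k) * h (x l)) =
      if k = l then ∑ i, p i * h i ^ 2 else 0 := by
  have key : ∀ x : Fin N → Fin d, (∏ m, p (x m)) * (h (x k) * h (x l)) =
      ∏ m, (p (x m) * (if m = k then h (x m) else 1) * (if m = l then h (x m) else 1)) := by
    intro x
    rw [Finset.prod_mul_distrib, Finset.prod_mul_distrib,
      Finset.prod_ite_eq' Finset.univ k (fun m => h (x m)),
      Finset.prod_ite_eq' Finset.univ l (fun m => h (x m))]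
    simp [mul_assoc]
  rw [Finset.sum_congr rfl fun x _ => key x]
  rw [← Fintype.prod_sum (fun m i => p i * (if m = k then h i else 1) * (if m = l then h i else 1))]
  by_cases hkl : k = l
  · subst hkl
    simp only [if_pos rfl]
    rw [Finset.prod_eq_single k]
    · simp [pow_two, mul_assoc]
    · intro m _ hm
      simp only [if_neg hm, mul_one]
      exact hp1
    · simp
  · rw [if_neg hkl]
    apply Finset.prod_eq_zero (Finset.mem_univ k)
    simp only [if_pos rfl, if_neg hkl, mul_one]
    exact hsum

lemma variance_identity {d : ℕ} (p h : Fin d → ℝ) (hp1 : ∑ i, p i = 1)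
    (hsum : ∑ i, p i * h i = 0) (N : ℕ) :
    ∑ x : Fin N → Fin d, (∏ m, p (x m)) * (∑ k, h (x k)) ^ 2
      = N * ∑ i, p i * h i ^ 2 := by
  have e1 : ∀ x : Fin N → Fin d, (∏ m, p (x m)) * (∑ k, h (x k)) ^ 2
      = ∑ k, ∑ l, (∏ m, p (x m)) * (h (x k) * h (x l)) := by
    intro x
    rw [sq, Finset.sum_mul_sum]
    simp_rw [Finset.mul_sum]
  rw [Finset.sum_congr rfl fun x _ => e1 x]
  rw [Finset.sum_comm]
  have e2 : ∀ k : Fin N, ∑ x : Fin N → Fin d, ∑ l, (∏ m, p (x m)) * (h (x k) * h (x l))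
      = ∑ l, ∑ x : Fin N → Fin d, (∏ m, p (x m)) * (h (x k) * h (x l)) :=
    fun k => Finset.sum_comm
  rw [Finset.sum_congr rfl fun k _ => e2 k]
  rw [Finset.sum_congr rfl fun k _ => Finset.sum_congr rfl fun l _ =>
    prod_sum_factor p h hp1 hsum k l]
  simp [Finset.sum_ite_eq', mul_comm]

lemma main_classical {d : ℕ} (p : Fin d → ℝ) (hp0 : ∀ i, 0 ≤ p i) (hp1 : ∑ i, p i = 1)
    (H ε : ℝ) (hH : H = -∑ i, p i * Real.logb 2 (p i)) (hε : 0 < ε)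
    (N : ℕ) (hN : 1 ≤ N) (s : (Fin N → Fin d) → ℝ)
    (hs0 : ∀ x, 0 ≤ s x) (hs1 : ∀ x, s x ≤ 1)
    (hstr : ∑ x, s x ≤ (2:ℝ) ^ ((N:ℝ) * (H - 2*ε))) :
    ∑ x, s x * ∏ k, p (x k) ≤
      (2:ℝ) ^ (-(N:ℝ)*ε) + (∑ i, p i * (Real.logb 2 (p i) + H) ^ 2) / ((N:ℝ) * ε ^ 2) := by
  set h : Fin d → ℝ := fun i => -(Real.logb 2 (p i) + H) with hh
  have hsum : ∑ i, p i * h i = 0 := by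
    simp only [hh, mul_neg, mul_add, Finset.sum_neg_distrib, Finset.sum_add_distrib,
      ← Finset.sum_mul, hp1, one_mul]
    rw [hH]; ring
  set q : (Fin N → Fin d) → ℝ := fun x => ∏ k, p (x k) with hq
  have hq0 : ∀ x, 0 ≤ q x := fun x => Finset.prod_nonneg fun k _ => hp0 _
  set V : ℝ := ∑ i, p i * (Real.logb 2 (p i) + H) ^ 2 with hV
  have hV' : ∑ i, p i * h i ^ 2 = V := by
    simp only [hh, hV]
    exact Finset.sum_congr rfl fun i _ => by ring
  set T : Finset (Fin N → Fin d) :=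
    Finset.univ.filter (fun x => q x ≤ (2:ℝ) ^ (-(N:ℝ)*(H - ε))) with hT
  have hNpos : (0:ℝ) < N := by exact_mod_cast hN
  have bound1 : ∑ x ∈ T, s x * q x ≤ (2:ℝ) ^ (-(N:ℝ)*ε) := by
    calc ∑ x ∈ T, s x * q x
        ≤ ∑ x ∈ T, s x * (2:ℝ) ^ (-(N:ℝ)*(H - ε)) := by
          apply Finset.sum_le_sum
          intro x hx
          exact mul_le_mul_of_nonneg_left ((Finset.mem_filter.mp hx).2) (hs0 x)
      _ = (∑ x ∈ T, s x) * (2:ℝ) ^ (-(N:ℝ)*(H - ε)) := by rw [Finset.sum_mul]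
      _ ≤ (∑ x, s x) * (2:ℝ) ^ (-(N:ℝ)*(H - ε)) := by
          apply mul_le_mul_of_nonneg_right _ (Real.rpow_nonneg (by norm_num) _)
          exact Finset.sum_le_sum_of_subset_of_nonneg (Finset.subset_univ _)
            (fun x _ _ => hs0 x)
      _ ≤ (2:ℝ) ^ ((N:ℝ)*(H - 2*ε)) * (2:ℝ) ^ (-(N:ℝ)*(H - ε)) := by
          apply mul_le_mul_of_nonneg_right hstr (Real.rpow_nonneg (by norm_num) _)
      _ = (2:ℝ) ^ (-(N:ℝ)*ε) := by
          rw [← Real.rpow_add (by norm_num)]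
          ring_nf
  have key : ∀ x ∈ Tᶜ, q x ≤ q x * (∑ k, h (x k)) ^ 2 / ((N:ℝ)*ε)^2 := by
    intro x hx
    rw [Finset.mem_compl, hT, Finset.mem_filter] at hx
    push_neg at hx
    have hqlt : (2:ℝ) ^ (-(N:ℝ)*(H - ε)) < q x := hx (Finset.mem_univ x)
    have hqpos : 0 < q x := lt_trans (Real.rpow_pos_of_pos (by norm_num) _) hqlt
    have hppos : ∀ k, 0 < p (x k) := by
      intro k
      rcases lt_or_eq_of_le (hp0 (x k)) with h' | h'
      · exact h'
      · exfalso; apply ne_of_gt hqpos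
        exact Finset.prod_eq_zero (Finset.mem_univ k) h'.symm
    have hlogq : Real.logb 2 (q x) = ∑ k, Real.logb 2 (p (x k)) := by
      rw [hq]
      exact Real.logb_prod _ _ fun k _ => (hppos k).ne'
    have hlog : -(N:ℝ)*(H - ε) < Real.logb 2 (q x) :=
      (Real.lt_logb_iff_rpow_lt (by norm_num) hqpos).mpr hqlt
    have hsumh : ∑ k, h (x k) < -((N:ℝ)*ε) := by
      have : ∑ k, h (x k) = -(Real.logb 2 (q x)) - N * H := by
        simp only [hh, neg_add, Finset.sum_add_distrib, hlogq, Finset.sum_neg_distrib,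
          Finset.sum_const, Finset.card_univ, Fintype.card_fin, nsmul_eq_mul]
        ring
      rw [this]
      nlinarith
    have hsq : ((N:ℝ)*ε)^2 ≤ (∑ k, h (x k))^2 := by
      have h1 : 0 < (N:ℝ)*ε := mul_pos hNpos hε
      nlinarith
    rw [le_div_iff₀ (by positivity)]
    calc q x * ((N:ℝ)*ε)^2 ≤ q x * (∑ k, h (x k))^2 :=
          mul_le_mul_of_nonneg_left hsq (hq0 x)
      _ = _ := by ring
  have bound2 : ∑ x ∈ Tᶜ, s x * q x ≤ V / ((N:ℝ) * ε^2) := by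
    calc ∑ x ∈ Tᶜ, s x * q x
        ≤ ∑ x ∈ Tᶜ, q x := by
          apply Finset.sum_le_sum
          intro x _
          nth_rewrite 2 [← one_mul (q x)]
          exact mul_le_mul_of_nonneg_right (hs1 x) (hq0 x)
      _ ≤ ∑ x ∈ Tᶜ, q x * (∑ k, h (x k)) ^ 2 / ((N:ℝ)*ε)^2 := Finset.sum_le_sum key
      _ ≤ ∑ x, q x * (∑ k, h (x k)) ^ 2 / ((N:ℝ)*ε)^2 := by
          apply Finset.sum_le_sum_of_subset_of_nonneg (Finset.subset_univ _)
          intro x _ _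
          exact div_nonneg (mul_nonneg (hq0 x) (sq_nonneg _)) (sq_nonneg _)
      _ = (∑ x, q x * (∑ k, h (x k)) ^ 2) / ((N:ℝ)*ε)^2 := by rw [← Finset.sum_div]
      _ = ((N:ℝ) * V) / ((N:ℝ)*ε)^2 := by
          rw [← hV', ← variance_identity p h hp1 hsum N]
      _ = V / ((N:ℝ) * ε^2) := by
          field_simp
  calc ∑ x, s x * q x = ∑ x ∈ T, s x * q x + ∑ x ∈ Tᶜ, s x * q x :=
        (Finset.sum_add_sum_compl T _).symm
    _ ≤ _ := add_le_add bound1 bound2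

/-- Any sequence of projections of rank below `2^{NR}` with `R < S(ρ)` captures a vanishing
fraction of the weight of `ρ^{⊗N}`. -/
theorem small_projections_capture_little_weight (d : ℕ)
    (ρ : Matrix (Fin d) (Fin d) ℂ) (hρ : ρ.PosSemidef) (htr : ρ.trace = 1)
    (R : ℝ) (hR : R < vnEntropy hρ.1)
    (δ : ℝ) (hδ : 0 < δ) :
    ∃ N₀ : ℕ, ∀ N ≥ N₀,
      ∀ S_N : Matrix (Fin N → Fin d) (Fin N → Fin d) ℂ,
        S_N.IsHermitian → S_N * S_N = S_N →
        (S_N.trace).re < (2 : ℝ) ^ ((N : ℝ) * R) →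
        ((S_N * tpow ρ N).trace).re ≤ δ := by
  classical
  set p : Fin d → ℝ := hρ.1.eigenvalues with hp
  have hp0 : ∀ i, 0 ≤ p i := hρ.eigenvalues_nonneg
  set H : ℝ := vnEntropy hρ.1 with hHdef
  have hH : H = -∑ i, p i * Real.logb 2 (p i) := by rw [hHdef]; rfl
  set V₁ : Matrix (Fin d) (Fin d) ℂ := (hρ.1.eigenvectorUnitary : Matrix (Fin d) (Fin d) ℂ) with hV₁
  have hVV : star V₁ * V₁ = 1 := hρ.1.eigenvectorUnitary.prop.1
  have hVV' : V₁ * star V₁ = 1 := hρ.1.eigenvectorUnitary.prop.2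
  have hspec : ρ = V₁ * Matrix.diagonal (fun i => (p i : ℂ)) * star V₁ := by
    have h := hρ.1.spectral_theorem
    exact h
  have hp1 : ∑ i, p i = 1 := by
    have h1 : ρ.trace = ∑ i, (p i : ℂ) := by
      conv_lhs => rw [hspec]
      rw [Matrix.trace_mul_cycle, hVV, one_mul, Matrix.trace_diagonal]
    rw [htr] at h1
    have h2 := congrArg Complex.re h1
    simpa [Complex.re_sum] using h2.symm
  set ε : ℝ := (H - R)/2 with hεdef
  have hε : 0 < ε := by rw [hεdef]; linarith
  set Vr : ℝ := ∑ i, p i * (Real.logb 2 (p i) + H)^2 with hVrdef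
  have h1 : Filter.Tendsto (fun n : ℕ => (2:ℝ) ^ (-(n:ℝ)*ε)) Filter.atTop (nhds 0) := by
    have he : (fun n : ℕ => (2:ℝ) ^ (-(n:ℝ)*ε)) = fun n : ℕ => ((2:ℝ) ^ (-ε))^n := by
      funext n
      rw [← Real.rpow_natCast ((2:ℝ)^(-ε)) n, ← Real.rpow_mul (by norm_num)]
      ring_nf
    rw [he]
    exact tendsto_pow_atTop_nhds_zero_of_lt_one (Real.rpow_nonneg (by norm_num) _)
      (Real.rpow_lt_one_of_one_lt_of_neg (by norm_num) (by linarith))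
  have h2 : Filter.Tendsto (fun n : ℕ => Vr / ((n:ℝ) * ε^2)) Filter.atTop (nhds 0) := by
    have he : (fun n : ℕ => Vr / ((n:ℝ) * ε^2)) = fun n : ℕ => (Vr / ε^2) / n := by
      funext n
      rw [div_div, mul_comm]
    rw [he]
    exact tendsto_const_div_atTop_nhds_zero_nat _
  obtain ⟨N₁, hN₁⟩ := Filter.eventually_atTop.mp (h1.eventually_lt_const (half_pos hδ))
  obtain ⟨N₂, hN₂⟩ := Filter.eventually_atTop.mp (h2.eventually_lt_const (half_pos hδ))
  refine ⟨max (max N₁ N₂) 1, fun N hN S hS hSS hStr => ?_⟩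
  have hNge1 : 1 ≤ N := le_trans (le_max_right _ _) hN
  have hNgeN₁ : N₁ ≤ N := le_trans (le_trans (le_max_left _ _) (le_max_left _ _)) hN
  have hNgeN₂ : N₂ ≤ N := le_trans (le_trans (le_max_right _ _) (le_max_left _ _)) hN
  -- matrix reduction
  set W : Matrix (Fin N → Fin d) (Fin N → Fin d) ℂ := tpow V₁ N with hW
  have hρtpow : tpow ρ N
      = W * Matrix.diagonal (fun x : Fin N → Fin d => ∏ k, (p (x k) : ℂ)) * star W := by
    conv_lhs => rw [hspec]
    rw [tpow_mul', tpow_mul', tpow_star', tpow_diagonal']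
  have hWW : star W * W = 1 := by rw [hW, ← tpow_star', ← tpow_mul', hVV, tpow_one']
  have hWW' : W * star W = 1 := by rw [hW, ← tpow_star', ← tpow_mul', hVV', tpow_one']
  set S' : Matrix (Fin N → Fin d) (Fin N → Fin d) ℂ := star W * S * W with hS'
  have hS'H : S'ᴴ = S' := by
    rw [hS', Matrix.star_eq_conjTranspose, Matrix.conjTranspose_mul, Matrix.conjTranspose_mul,
      Matrix.conjTranspose_conjTranspose, hS.eq, Matrix.mul_assoc]
  have hS'2 : S' * S' = S' := by
    rw [hS']
    calc (star W * S * W) * (star W * S * W)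
        = star W * (S * (W * star W) * S) * W := by
          simp only [Matrix.mul_assoc]
      _ = star W * S * W := by rw [hWW', Matrix.mul_one, hSS, Matrix.mul_assoc]
  have htrS' : S'.trace = S.trace := by
    rw [hS', Matrix.trace_mul_cycle, hWW', one_mul]
  have htrprod : (S * tpow ρ N).trace
      = (S' * Matrix.diagonal (fun x : Fin N → Fin d => ∏ k, (p (x k) : ℂ))).trace := by
    rw [hρtpow, ← Matrix.mul_assoc, ← Matrix.mul_assoc, Matrix.trace_mul_comm,
      ← Matrix.mul_assoc, ← Matrix.mul_assoc, hS']
  set s : (Fin N → Fin d) → ℝ := fun x => (S' x x).re with hsdef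
  have hdiag_im : ∀ x, (S' x x).im = 0 := by
    intro x
    have h3 := congrFun (congrFun hS'H x) x
    rw [Matrix.conjTranspose_apply] at h3
    exact Complex.conj_eq_iff_im.mp h3
  have hdiag_eq : ∀ x, (S' x x).re = ∑ y, Complex.normSq (S' x y) := by
    intro x
    have h0 : S' x x = ∑ y, S' x y * S' y x := by
      conv_lhs => rw [← hS'2]
      rw [Matrix.mul_apply]
    have h1' : ∀ y, S' x y * S' y x = (Complex.normSq (S' x y) : ℂ) := by
      intro y
      have h3 := congrFun (congrFun hS'H y) x
      rw [Matrix.conjTranspose_apply] at h3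
      rw [← h3]
      exact Complex.mul_conj _
    rw [h0, Finset.sum_congr rfl fun y _ => h1' y, Complex.re_sum]
    simp
  have hs0 : ∀ x, 0 ≤ s x := by
    intro x
    rw [hsdef]
    simp only
    rw [hdiag_eq x]
    exact Finset.sum_nonneg fun y _ => Complex.normSq_nonneg _
  have hs1 : ∀ x, s x ≤ 1 := by
    intro x
    have h3 : Complex.normSq (S' x x) ≤ ∑ y, Complex.normSq (S' x y) :=
      Finset.single_le_sum (f := fun y => Complex.normSq (S' x y))
        (fun y _ => Complex.normSq_nonneg _) (Finset.mem_univ x)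
    have h4 : Complex.normSq (S' x x) = s x ^ 2 := by
      rw [Complex.normSq_apply, hdiag_im x]
      simp [hsdef, pow_two]
    have h5 : s x ^ 2 ≤ s x := by
      rw [← h4]
      rw [hsdef]
      simp only
      rw [hdiag_eq x]
      exact h3
    nlinarith [hs0 x]
  have hsumS : ∑ x, s x = (S.trace).re := by
    rw [← htrS', Matrix.trace, Complex.re_sum]
    rfl
  have hfin : ((S * tpow ρ N).trace).re = ∑ x, s x * ∏ k, p (x k) := by
    rw [htrprod]
    have h6 : (S' * Matrix.diagonal (fun x : Fin N → Fin d => ∏ k, (p (x k) : ℂ))).trace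
        = ∑ x, S' x x * ∏ k, (p (x k) : ℂ) := by
      simp [Matrix.trace, Matrix.diag, Matrix.mul_diagonal]
    rw [h6, Complex.re_sum]
    apply Finset.sum_congr rfl
    intro x _
    rw [← Complex.ofReal_prod, Complex.mul_re, Complex.ofReal_re, Complex.ofReal_im]
    simp [hsdef]
  have hRε : H - 2*ε = R := by rw [hεdef]; ring
  have hstr : ∑ x, s x ≤ (2:ℝ) ^ ((N:ℝ) * (H - 2*ε)) := by
    rw [hRε, hsumS]
    exact le_of_lt hStr
  have hmain := main_classical p hp0 hp1 H ε hH hε N hNge1 s hs0 hs1 hstr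
  rw [hfin]
  calc ∑ x, s x * ∏ k, p (x k)
      ≤ (2:ℝ) ^ (-(N:ℝ)*ε) + Vr / ((N:ℝ) * ε ^ 2) := hmain
    _ ≤ δ/2 + δ/2 := add_le_add (le_of_lt (hN₁ N hNgeN₁)) (le_of_lt (hN₂ N hNgeN₂))
    _ = δ := by ring
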